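/- Let c be a positive integer and let x₁, x₂ be integers. Define G(x₁, x₂; c) = c^{-3} ∑_{a=0}^{c-1} ∑_{b=0}^{c-1} S(a, b²; c) e((a x₁ + b x₂)/c). If gcd(x₁, c) > 1 then G(x₁, x₂; c) = 0, while if gcd(x₁, c) = 1 then G(x₁, x₂; c) = c^{-2} ∑_{b=0}^{c-1} e((−x̄₁ b² + x₂ b)/c), where x̄₁ denotes any integer with x₁ x̄₁ ≡ 1 (mod c). -/

import Mathlib

open Complex

/-- `e(x) = exp(2πix)`. -/
noncomputable def eAdd (x : ℝ) : ℂ := Complex.exp (2 * Real.pi * Complex.I * x)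

lemma eAdd_add (x y : ℝ) : eAdd (x + y) = eAdd x * eAdd y := by
  rw [eAdd, eAdd, eAdd, ← Complex.exp_add]
  congr 1; push_cast; ring

lemma eAdd_int (n : ℤ) : eAdd (n : ℝ) = 1 := by
  rw [eAdd, Complex.exp_eq_one_iff]
  exact ⟨n, by push_cast; ring⟩

lemma eAdd_nat_mul (n : ℕ) (x : ℝ) : eAdd (n * x) = eAdd x ^ n := by
  rw [eAdd, eAdd, ← Complex.exp_nat_mul]
  congr 1; push_cast; ring

lemma eAdd_ne_one (c : ℕ) (hc : 0 < c) (m : ℤ) (h : ¬ (c : ℤ) ∣ m) :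
    eAdd ((m : ℝ) / c) ≠ 1 := by
  intro h1
  rw [eAdd, Complex.exp_eq_one_iff] at h1
  obtain ⟨n, hn⟩ := h1
  have h2 : (2 * Real.pi * Complex.I : ℂ) ≠ 0 := by
    simp [Real.pi_ne_zero, Complex.I_ne_zero]
  rw [mul_comm ((n : ℂ)) _] at hn
  have hx : (((m : ℝ) / c : ℝ) : ℂ) = (n : ℂ) := mul_left_cancel₀ h2 hn
  have hx' : (m : ℝ) / c = (n : ℝ) := by exact_mod_cast hx
  have hcne : (c : ℝ) ≠ 0 := Nat.cast_ne_zero.mpr hc.ne'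
  have : (m : ℝ) = n * c := by field_simp at hx'; linarith
  refine h ⟨n, ?_⟩
  have : (m : ℝ) = ((c * n : ℤ) : ℝ) := this.trans (by push_cast; ring)
  exact_mod_cast this

lemma eAdd_div_add (c : ℕ) (hc : 0 < c) (p q : ℤ) :
    eAdd ((p : ℝ) / c) * eAdd ((q : ℝ) / c) = eAdd (((p + q : ℤ) : ℝ) / c) := by
  rw [← eAdd_add]; congr 1; push_cast; ring

lemma sum_eAdd (c : ℕ) (hc : 0 < c) (m : ℤ) :
    ∑ a ∈ Finset.range c, eAdd ((((a : ℤ) * m : ℤ) : ℝ) / c) =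
      if (c : ℤ) ∣ m then (c : ℂ) else 0 := by
  have hcne : (c : ℝ) ≠ 0 := Nat.cast_ne_zero.mpr hc.ne'
  have key : ∀ a ∈ Finset.range c,
      eAdd ((((a : ℤ) * m : ℤ) : ℝ) / c) = eAdd ((m : ℝ) / c) ^ a := by
    intro a _
    rw [← eAdd_nat_mul]
    congr 1; push_cast; ring
  rw [Finset.sum_congr rfl key]
  by_cases h : (c : ℤ) ∣ m
  · obtain ⟨k, hk⟩ := h
    have h1 : eAdd ((m : ℝ) / c) = 1 := by
      have hmc : (m : ℝ) / c = ((k : ℤ) : ℝ) := by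
        rw [hk]; push_cast; field_simp
      rw [hmc, eAdd_int]
    rw [if_pos ⟨k, hk⟩]
    simp [h1]
  · rw [if_neg h]
    have hζ : eAdd ((m : ℝ) / c) ≠ 1 := eAdd_ne_one c hc m h
    rw [geom_sum_eq hζ]
    have hpow : eAdd ((m : ℝ) / c) ^ c = 1 := by
      rw [← eAdd_nat_mul]
      have : (c : ℝ) * ((m : ℝ) / c) = (m : ℝ) := by field_simp
      rw [this, eAdd_int]
    simp [hpow]

lemma eAdd_congr (c : ℕ) (hc : 0 < c) {m n : ℤ} (h : m ≡ n [ZMOD (c : ℤ)]) :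
    eAdd ((m : ℝ) / c) = eAdd ((n : ℝ) / c) := by
  have hcne : (c : ℝ) ≠ 0 := Nat.cast_ne_zero.mpr hc.ne'
  obtain ⟨k, hk⟩ := h.dvd
  have hn : (n : ℝ) = m + c * k := by
    have : n = m + c * k := by omega
    rw [this]; push_cast; ring
  have : (n : ℝ) / c = (m : ℝ) / c + ((k : ℤ) : ℝ) := by
    rw [hn]; push_cast; field_simp
  rw [this, eAdd_add, eAdd_int, mul_one]

/-- The Kloosterman sum `S(a, b; c) = ∑_{d mod c, (d,c)=1} e((ad + b d̄)/c)`,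
where `d̄` is the inverse of `d` modulo `c` (computed in `ZMod c`). -/
noncomputable def kloos (a b : ℤ) (c : ℕ) : ℂ :=
  ∑ d ∈ (Finset.range c).filter (fun d => Nat.gcd d c = 1),
    eAdd (((a * (d : ℤ) + b * ((((d : ZMod c)⁻¹).val : ℤ)) : ℤ) : ℝ) / c)

/-- The arithmetic part `G(x₁, x₂; c) = c^{-3} ∑_{a,b mod c} S(a, b²; c) e((a x₁ + b x₂)/c)`. -/
noncomputable def Garith (x₁ x₂ : ℤ) (c : ℕ) : ℂ :=
  ((c : ℂ) ^ 3)⁻¹ *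
    ∑ a ∈ Finset.range c, ∑ b ∈ Finset.range c,
      kloos (a : ℤ) ((b : ℤ) ^ 2) c * eAdd ((((a : ℤ) * x₁ + (b : ℤ) * x₂ : ℤ) : ℝ) / c)

lemma Garith_main (c : ℕ) (hc : 0 < c) (x₁ x₂ : ℤ) :
    Garith x₁ x₂ c = ((c : ℂ) ^ 3)⁻¹ * ∑ b ∈ Finset.range c,
      ∑ d ∈ (Finset.range c).filter (fun d => Nat.gcd d c = 1),
        (if (c : ℤ) ∣ ((d : ℤ) + x₁) then (c : ℂ) else 0) *
          eAdd ((((b : ℤ) ^ 2 * ((((d : ZMod c)⁻¹).val : ℤ)) + (b : ℤ) * x₂ : ℤ) : ℝ) / c) := by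
  unfold Garith kloos
  congr 1
  rw [Finset.sum_comm]
  refine Finset.sum_congr rfl fun b _ => ?_
  calc
    ∑ a ∈ Finset.range c,
        (∑ d ∈ (Finset.range c).filter (fun d => Nat.gcd d c = 1),
            eAdd ((((a : ℤ) * (d : ℤ) + (b : ℤ) ^ 2 * ((((d : ZMod c)⁻¹).val : ℤ)) : ℤ) : ℝ) / c)) *
          eAdd ((((a : ℤ) * x₁ + (b : ℤ) * x₂ : ℤ) : ℝ) / c)
      = ∑ a ∈ Finset.range c,
          ∑ d ∈ (Finset.range c).filter (fun d => Nat.gcd d c = 1),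
            eAdd ((((a : ℤ) * (d : ℤ) + (b : ℤ) ^ 2 * ((((d : ZMod c)⁻¹).val : ℤ)) : ℤ) : ℝ) / c) *
              eAdd ((((a : ℤ) * x₁ + (b : ℤ) * x₂ : ℤ) : ℝ) / c) := by
        simp [Finset.sum_mul]
    _ = ∑ d ∈ (Finset.range c).filter (fun d => Nat.gcd d c = 1),
          ∑ a ∈ Finset.range c,
            eAdd ((((a : ℤ) * (d : ℤ) + (b : ℤ) ^ 2 * ((((d : ZMod c)⁻¹).val : ℤ)) : ℤ) : ℝ) / c) *
              eAdd ((((a : ℤ) * x₁ + (b : ℤ) * x₂ : ℤ) : ℝ) / c) := Finset.sum_comm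
    _ = ∑ d ∈ (Finset.range c).filter (fun d => Nat.gcd d c = 1),
        (if (c : ℤ) ∣ ((d : ℤ) + x₁) then (c : ℂ) else 0) *
          eAdd ((((b : ℤ) ^ 2 * ((((d : ZMod c)⁻¹).val : ℤ)) + (b : ℤ) * x₂ : ℤ) : ℝ) / c) := by
        refine Finset.sum_congr rfl fun d _ => ?_
        have step : ∀ a : ℕ,
            eAdd ((((a : ℤ) * (d : ℤ) + (b : ℤ) ^ 2 * ((((d : ZMod c)⁻¹).val : ℤ)) : ℤ) : ℝ) / c) *
              eAdd ((((a : ℤ) * x₁ + (b : ℤ) * x₂ : ℤ) : ℝ) / c)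
            = eAdd ((((a : ℤ) * ((d : ℤ) + x₁) : ℤ) : ℝ) / c) *
              eAdd ((((b : ℤ) ^ 2 * ((((d : ZMod c)⁻¹).val : ℤ)) + (b : ℤ) * x₂ : ℤ) : ℝ) / c) := by
          intro a
          rw [eAdd_div_add c hc, eAdd_div_add c hc]
          congr 2
          ring
        simp only [step]
        rw [← Finset.sum_mul, sum_eAdd c hc]

/-- Evaluation of the arithmetic part: `G(x₁, x₂; c)` vanishes unless
`gcd(x₁, c) = 1`, in which case it equals
`c^{-2} ∑_{b mod c} e((−x̄₁ b² + x₂ b)/c)` for any inverse `x̄₁` of `x₁` mod `c`. -/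
theorem Garith_eval (c : ℕ) (hc : 0 < c) (x₁ x₂ : ℤ) :
    (1 < Int.gcd x₁ (c : ℤ) → Garith x₁ x₂ c = 0) ∧
    (Int.gcd x₁ (c : ℤ) = 1 → ∀ y : ℤ, x₁ * y ≡ 1 [ZMOD (c : ℤ)] →
      Garith x₁ x₂ c =
        ((c : ℂ) ^ 2)⁻¹ *
          ∑ b ∈ Finset.range c, eAdd (((-y * (b : ℤ) ^ 2 + x₂ * (b : ℤ) : ℤ) : ℝ) / c)) := by
  haveI : NeZero c := ⟨hc.ne'⟩
  have hcC : (c : ℂ) ≠ 0 := Nat.cast_ne_zero.mpr hc.ne'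
  constructor
  · intro hgcd
    rw [Garith_main c hc x₁ x₂]
    rw [Finset.sum_eq_zero, mul_zero]
    intro b _
    refine Finset.sum_eq_zero fun d hd => ?_
    simp only [Finset.mem_filter, Finset.mem_range] at hd
    rw [if_neg, zero_mul]
    intro hdvd
    set g := Int.gcd x₁ (c : ℤ) with hg
    have hgx : (g : ℤ) ∣ x₁ := Int.gcd_dvd_left _ _
    have hgc : (g : ℤ) ∣ (c : ℤ) := Int.gcd_dvd_right _ _
    have hgd : (g : ℤ) ∣ (d : ℤ) := by
      have : (g : ℤ) ∣ ((d : ℤ) + x₁) := hgc.trans hdvd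
      have := this.sub hgx
      simpa using this
    have h1 : g ∣ Nat.gcd d c :=
      Nat.dvd_gcd (by exact_mod_cast hgd) (by exact_mod_cast hgc)
    rw [hd.2] at h1
    have := Nat.le_of_dvd one_pos h1
    omega
  · intro hgcd y hy
    rw [Garith_main c hc x₁ x₂]
    set d₀ : ℕ := ((-x₁) % (c : ℤ)).toNat with hd₀
    have hcz : (0 : ℤ) < c := by exact_mod_cast hc
    have hd₀cast : ((d₀ : ℕ) : ℤ) = (-x₁) % (c : ℤ) :=
      Int.toNat_of_nonneg (Int.emod_nonneg _ hcz.ne')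
    have hd₀lt : d₀ < c := by
      have := Int.emod_lt_of_pos (-x₁) hcz
      omega
    have hzcast : ((d₀ : ℕ) : ZMod c) = ((-x₁ : ℤ) : ZMod c) := by
      have : (((d₀ : ℕ) : ℤ) : ZMod c) = ((-x₁ : ℤ) : ZMod c) := by
        rw [ZMod.intCast_eq_intCast_iff']
        rw [hd₀cast, Int.emod_emod_of_dvd _ dvd_rfl]
      exact_mod_cast this
    have hyz : ((x₁ : ℤ) : ZMod c) * ((y : ℤ) : ZMod c) = 1 := by
      have := (ZMod.intCast_eq_intCast_iff _ _ _).mpr hy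
      push_cast at this
      simpa using this
    have hunit : ((d₀ : ℕ) : ZMod c) * ((-y : ℤ) : ZMod c) = 1 := by
      rw [hzcast]
      push_cast
      rw [neg_mul_neg]
      exact hyz
    have hcop : Nat.gcd d₀ c = 1 := by
      have := (ZMod.isUnit_iff_coprime d₀ c).mp (IsUnit.of_mul_eq_one _ hunit)
      exact this
    have hinv : ((d₀ : ℕ) : ZMod c)⁻¹ = ((-y : ℤ) : ZMod c) :=
      ZMod.inv_eq_of_mul_eq_one _ _ _ hunit
    have hmem : d₀ ∈ (Finset.range c).filter (fun d => Nat.gcd d c = 1) :=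
      Finset.mem_filter.mpr ⟨Finset.mem_range.mpr hd₀lt, hcop⟩
    have hcond : ∀ d : ℕ, d < c → ((c : ℤ) ∣ ((d : ℤ) + x₁) ↔ d = d₀) := by
      intro d hdlt
      constructor
      · intro hdvd
        have h1 : (d : ℤ) % c = (-x₁) % c := by
          have h' : (-x₁) ≡ (d : ℤ) [ZMOD (c : ℤ)] :=
            Int.modEq_iff_dvd.mpr (by simpa [sub_neg_eq_add, add_comm] using hdvd)
          exact h'.symm
        have h2 : (d : ℤ) % c = d := Int.emod_eq_of_lt (by positivity) (by exact_mod_cast hdlt)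
        omega
      · rintro rfl
        rw [hd₀cast]
        refine ⟨-((-x₁) / c), ?_⟩
        have h2 := Int.emod_add_mul_ediv (-x₁) (c : ℤ)
        linear_combination h2
    have hval : ((((d₀ : ZMod c)⁻¹).val : ℤ) : ZMod c) = ((-y : ℤ) : ZMod c) := by
      rw [← hinv]
      have h3 : ((((d₀ : ZMod c)⁻¹).val : ℤ) : ZMod c) = ((((d₀ : ZMod c)⁻¹).val : ℕ) : ZMod c) := by
        push_cast; rfl
      rw [h3, ZMod.natCast_val, ZMod.cast_id]
    have hmodeq : ((((d₀ : ZMod c)⁻¹).val : ℤ)) ≡ -y [ZMOD (c : ℤ)] :=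
      (ZMod.intCast_eq_intCast_iff _ _ _).mp hval
    have hsum : ∀ b : ℕ,
        (∑ d ∈ (Finset.range c).filter (fun d => Nat.gcd d c = 1),
          (if (c : ℤ) ∣ ((d : ℤ) + x₁) then (c : ℂ) else 0) *
            eAdd ((((b : ℤ) ^ 2 * ((((d : ZMod c)⁻¹).val : ℤ)) + (b : ℤ) * x₂ : ℤ) : ℝ) / c))
        = (c : ℂ) * eAdd (((-y * (b : ℤ) ^ 2 + x₂ * (b : ℤ) : ℤ) : ℝ) / c) := by
      intro b
      have hterm : ∀ d ∈ (Finset.range c).filter (fun d => Nat.gcd d c = 1),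
          (if (c : ℤ) ∣ ((d : ℤ) + x₁) then (c : ℂ) else 0) *
            eAdd ((((b : ℤ) ^ 2 * ((((d : ZMod c)⁻¹).val : ℤ)) + (b : ℤ) * x₂ : ℤ) : ℝ) / c)
          = if d = d₀ then (c : ℂ) * eAdd (((-y * (b : ℤ) ^ 2 + x₂ * (b : ℤ) : ℤ) : ℝ) / c)
            else 0 := by
        intro d hd
        simp only [Finset.mem_filter, Finset.mem_range] at hd
        by_cases hdd : d = d₀
        · subst hdd
          rw [if_pos ((hcond d₀ hd₀lt).mpr rfl), if_pos rfl]
          congr 1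
          have hcong : (b : ℤ) ^ 2 * ((((d₀ : ZMod c)⁻¹).val : ℤ)) + (b : ℤ) * x₂ ≡
              -y * (b : ℤ) ^ 2 + x₂ * (b : ℤ) [ZMOD (c : ℤ)] := by
            calc (b : ℤ) ^ 2 * ((((d₀ : ZMod c)⁻¹).val : ℤ)) + (b : ℤ) * x₂
                ≡ (b : ℤ) ^ 2 * (-y) + (b : ℤ) * x₂ [ZMOD (c : ℤ)] :=
                  (hmodeq.mul_left _).add_right _
              _ = -y * (b : ℤ) ^ 2 + x₂ * (b : ℤ) := by ring
          exact eAdd_congr c hc hcong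
        · rw [if_neg (fun h => hdd ((hcond d hd.1).mp h)), zero_mul, if_neg hdd]
      rw [Finset.sum_congr rfl hterm, Finset.sum_ite_eq', if_pos hmem]
    rw [Finset.sum_congr rfl (fun b _ => hsum b), ← Finset.mul_sum]
    rw [← mul_assoc]
    congr 1
    rw [pow_succ]
    field_simp
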